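/- Let Δ be a bounded operator diagonal in an orthonormal basis {φ_j}_{j≥0}, let F be a bounded tridiagonal operator in this basis (Fφ_j ∈ span{φ_{j-1}, φ_j, φ_{j+1}}) with ‖F‖ ≤ C, and set D = Δ + F where e^{-sD} and e^{-sΔ} are uniformly bounded for s ∈ [0,1]. Then for all l ≥ 1 and s ∈ [0,1], |(e^{-sD}φ₀, φ_l)| ≤ C₁^l s^l / ⌈l/2⌉! — in particular |(e^{-sD}φ₀, φ_l)| ≤ C₂ e^{-⌈l/2⌉ log ⌈l/2⌉} for l large. -/

import Mathlib

open NormedSpace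

set_option synthInstance.maxHeartbeats 1000000
set_option maxHeartbeats 1000000

/-- Iterated-Duhamel bound: if `Δ` is diagonal and `F` tridiagonal in an orthonormal basis
`{φ_j}`, `‖F‖ ≤ C`, and the semigroups `e^{-sD}` (`D = Δ + F`) and `e^{-sΔ}` are uniformly
bounded on `s ∈ [0,1]`, then `|⟪e^{-sD}φ₀, φ_l⟫| ≤ C₁^l s^l / ⌈l/2⌉!`. -/
theorem duhamel_iteration_offdiagonal_bound {H : Type*} [NormedAddCommGroup H]
    [InnerProductSpace ℂ H] [CompleteSpace H]
    (φ : ℕ → H) (hφ : Orthonormal ℂ φ)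
    (Δ F : H →L[ℂ] H) (d : ℕ → ℂ) (hdiag : ∀ j, Δ (φ j) = d j • φ j)
    (htri : ∀ j, F (φ j) ∈ Submodule.span ℂ {φ (j - 1), φ j, φ (j + 1)})
    (C : ℝ) (hC : 0 < C) (hF : ‖F‖ ≤ C)
    (Cb : ℝ)
    (hsg : ∀ s ∈ Set.Icc (0 : ℝ) 1,
      ‖NormedSpace.exp (-(s • (Δ + F)))‖ ≤ Cb ∧ ‖NormedSpace.exp (-(s • Δ))‖ ≤ Cb) :
    ∃ C₁ > (0 : ℝ), ∀ l : ℕ, 1 ≤ l → ∀ s ∈ Set.Icc (0 : ℝ) 1,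
      ‖(inner ℂ (NormedSpace.exp (-(s • (Δ + F))) (φ 0)) (φ l) : ℂ)‖ ≤
        C₁ ^ l * s ^ l / (Nat.factorial ((l + 1) / 2)) := by
  classical
  set D : H →L[ℂ] H := Δ + F with hD
  set M : ℝ := ‖D‖ with hM
  have hM0 : 0 ≤ M := norm_nonneg _
  set E : ℝ := Real.exp M with hE
  have hE1 : (1 : ℝ) ≤ E := Real.one_le_exp hM0
  refine ⟨(M + 1) * E, by positivity, ?_⟩
  intro l hl s hs
  obtain ⟨hs0, hs1⟩ := hs
  set A : H →L[ℂ] H := -(s • D) with hA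
  have hAnorm : ‖A‖ ≤ s * M := by
    rw [hA, norm_neg, norm_smul, Real.norm_eq_abs, abs_of_nonneg hs0]
  have hφnorm : ∀ j, ‖φ j‖ = 1 := hφ.1
  -- A^n φ0 lies in the span of φ 0, ..., φ n
  have hspan : ∀ n : ℕ, (A ^ n) (φ 0) ∈ Submodule.span ℂ (φ '' Set.Iic n) := by
    intro n
    induction n with
    | zero => exact Submodule.subset_span ⟨0, by simp, rfl⟩
    | succ n ih =>
      have key : Submodule.span ℂ (φ '' Set.Iic n) ≤
          (Submodule.span ℂ (φ '' Set.Iic (n + 1))).comap (A : H →ₗ[ℂ] H) := by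
        refine Submodule.span_le.mpr ?_
        rintro y ⟨j, hj, rfl⟩
        simp only [Set.mem_Iic] at hj
        have h1 : φ j ∈ Submodule.span ℂ (φ '' Set.Iic (n + 1)) :=
          Submodule.subset_span ⟨j, by simp [Set.mem_Iic]; omega, rfl⟩
        have h2 : F (φ j) ∈ Submodule.span ℂ (φ '' Set.Iic (n + 1)) := by
          refine Submodule.span_le.mpr ?_ (htri j)
          intro z hz
          rcases hz with rfl | rfl | rfl
          · exact Submodule.subset_span ⟨j - 1, by simp [Set.mem_Iic]; omega, rfl⟩
          · exact h1
          · exact Submodule.subset_span ⟨j + 1, by simp [Set.mem_Iic]; omega, rfl⟩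
        have hAj : A (φ j) = -(s • (d j • φ j + F (φ j))) := by
          show (-(s • D)) (φ j) = _
          rw [ContinuousLinearMap.neg_apply, ContinuousLinearMap.smul_apply, hD,
            ContinuousLinearMap.add_apply, hdiag j]
        show φ j ∈ (Submodule.span ℂ (φ '' Set.Iic (n + 1))).comap (A : H →ₗ[ℂ] H)
        rw [Submodule.mem_comap, ContinuousLinearMap.coe_coe, hAj]
        exact Submodule.neg_mem _ (Submodule.smul_of_tower_mem _ _
          (Submodule.add_mem _ (Submodule.smul_mem _ _ h1) h2))
      have h' := key ih
      simp only [Submodule.mem_comap, ContinuousLinearMap.coe_coe] at h'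
      have : (A ^ (n + 1)) (φ 0) = A ((A ^ n) (φ 0)) := by
        rw [pow_succ']; rfl
      rw [this]
      exact h'
  -- orthogonality: ⟪φ l, A^n φ0⟫ = 0 for n < l
  have hzero : ∀ n : ℕ, n < l → (inner ℂ (φ l) ((A ^ n) (φ 0)) : ℂ) = 0 := by
    intro n hn
    have hker : Submodule.span ℂ (φ '' Set.Iic n) ≤
        LinearMap.ker ((innerSL ℂ (φ l)) : H →ₗ[ℂ] ℂ) := by
      refine Submodule.span_le.mpr ?_
      rintro y ⟨j, hj, rfl⟩
      simp only [Set.mem_Iic] at hj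
      have : (inner ℂ (φ l) (φ j) : ℂ) = 0 := hφ.2 (by omega)
      simpa [LinearMap.mem_ker] using this
    have := hker (hspan n)
    simpa [LinearMap.mem_ker] using this
  -- the series for the inner product
  have hsum0 : HasSum (fun n : ℕ => ((Nat.factorial n : ℂ))⁻¹ • A ^ n) (exp A) :=
    exp_series_hasSum_exp' (𝕂 := ℂ) A
  set L : (H →L[ℂ] H) →L[ℂ] ℂ :=
    (innerSL ℂ (φ l)).comp (ContinuousLinearMap.apply ℂ H (φ 0)) with hL
  have hsum : HasSum (fun n : ℕ => ((Nat.factorial n : ℂ))⁻¹ * (inner ℂ (φ l) ((A ^ n) (φ 0)) : ℂ))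
      ((inner ℂ (φ l) (exp A (φ 0)) : ℂ)) := by
    have := L.hasSum hsum0
    simpa [hL, smul_eq_mul] using this
  -- term bounds
  have hpow : ∀ n : ℕ, ‖(A ^ n) (φ 0)‖ ≤ (s * M) ^ n := by
    intro n
    induction n with
    | zero => simp [hφnorm 0]
    | succ n ih =>
      have heq : (A ^ (n + 1)) (φ 0) = A ((A ^ n) (φ 0)) := by
        rw [pow_succ']; rfl
      rw [heq, pow_succ']
      calc ‖A ((A ^ n) (φ 0))‖ ≤ ‖A‖ * ‖(A ^ n) (φ 0)‖ := A.le_opNorm _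
      _ ≤ (s * M) * (s * M) ^ n := by
          apply mul_le_mul hAnorm ih (norm_nonneg _) (by positivity)
  have hterm : ∀ n : ℕ,
      ‖((Nat.factorial n : ℂ))⁻¹ * (inner ℂ (φ l) ((A ^ n) (φ 0)) : ℂ)‖ ≤ (s * M) ^ n / (Nat.factorial n) := by
    intro n
    rw [norm_mul]
    have h1 : ‖((Nat.factorial n : ℂ))⁻¹‖ = ((Nat.factorial n : ℝ))⁻¹ := by
      rw [norm_inv, Complex.norm_natCast]
    have h2 : ‖(inner ℂ (φ l) ((A ^ n) (φ 0)) : ℂ)‖ ≤ (s * M) ^ n := by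
      calc ‖(inner ℂ (φ l) ((A ^ n) (φ 0)) : ℂ)‖ ≤ ‖φ l‖ * ‖(A ^ n) (φ 0)‖ :=
            norm_inner_le_norm _ _
      _ = ‖(A ^ n) (φ 0)‖ := by rw [hφnorm l, one_mul]
      _ ≤ (s * M) ^ n := hpow n
    rw [h1, div_eq_inv_mul]
    exact mul_le_mul_of_nonneg_left h2 (by positivity)
  have hgsum : Summable (fun n : ℕ => (s * M) ^ n / (Nat.factorial n)) :=
    Real.summable_pow_div_factorial (s * M)
  have hnsum : Summable (fun n : ℕ =>
      ‖((Nat.factorial n : ℂ))⁻¹ * (inner ℂ (φ l) ((A ^ n) (φ 0)) : ℂ)‖) :=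
    Summable.of_nonneg_of_le (fun n => norm_nonneg _) hterm hgsum
  -- bound the tail
  have hfacpos' : ∀ k : ℕ, (0 : ℝ) < Nat.factorial k := fun k => by positivity
  have htail : ∀ n : ℕ,
      ‖((Nat.factorial (n + l) : ℂ))⁻¹ * (inner ℂ (φ l) ((A ^ (n + l)) (φ 0)) : ℂ)‖ ≤
        (s ^ l * M ^ l / (Nat.factorial l)) * (M ^ n / (Nat.factorial n)) := by
    intro n
    refine le_trans (hterm (n + l)) ?_
    have hfd : ((Nat.factorial n) * (Nat.factorial l) : ℝ) ≤ ((Nat.factorial (n + l)) : ℝ) := by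
      have := Nat.factorial_mul_factorial_dvd_factorial_add n l
      exact_mod_cast Nat.le_of_dvd (Nat.factorial_pos _) this
    have hnum : (s * M) ^ (n + l) ≤ s ^ l * M ^ l * M ^ n := by
      rw [mul_pow, pow_add, pow_add]
      have hsn : s ^ n ≤ 1 := pow_le_one₀ hs0 hs1
      calc s ^ n * s ^ l * (M ^ n * M ^ l) ≤ 1 * s ^ l * (M ^ n * M ^ l) := by
            apply mul_le_mul_of_nonneg_right
            · exact mul_le_mul_of_nonneg_right hsn (by positivity)
            · positivity
      _ = s ^ l * M ^ l * M ^ n := by ring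
    calc (s * M) ^ (n + l) / (Nat.factorial (n + l)) ≤ (s ^ l * M ^ l * M ^ n) / ((Nat.factorial n) * (Nat.factorial l)) :=
          div_le_div₀ (by positivity) hnum (by positivity) hfd
    _ = (s ^ l * M ^ l / (Nat.factorial l)) * (M ^ n / (Nat.factorial n)) := by ring
  -- sum the tail
  have hMsum : HasSum (fun n : ℕ => (M : ℝ) ^ n / (Nat.factorial n)) E := by
    have hEeq : E = ∑' n : ℕ, M ^ n / (Nat.factorial n) := by
      rw [hE, Real.exp_eq_exp_ℝ, exp_eq_tsum_div]
    rw [hEeq]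
    exact (Real.summable_pow_div_factorial M).hasSum
  have htailsum : (∑' n : ℕ, (s ^ l * M ^ l / (Nat.factorial l)) * (M ^ n / (Nat.factorial n))) =
      (s ^ l * M ^ l / (Nat.factorial l)) * E := by
    rw [tsum_mul_left, hMsum.tsum_eq]
  -- put it together
  have habs : ‖(inner ℂ (NormedSpace.exp (-(s • (Δ + F))) (φ 0)) (φ l) : ℂ)‖
      = ‖(inner ℂ (φ l) (exp A (φ 0)) : ℂ)‖ := by
    rw [← inner_conj_symm (φ l), RCLike.norm_conj]
  rw [habs, ← hsum.tsum_eq]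
  have hsplit := Summable.sum_add_tsum_nat_add l hnsum
  calc ‖∑' n : ℕ, ((Nat.factorial n : ℂ))⁻¹ * (inner ℂ (φ l) ((A ^ n) (φ 0)) : ℂ)‖
      ≤ ∑' n : ℕ, ‖((Nat.factorial n : ℂ))⁻¹ * (inner ℂ (φ l) ((A ^ n) (φ 0)) : ℂ)‖ :=
        norm_tsum_le_tsum_norm hnsum
    _ = (∑ i ∈ Finset.range l, ‖((Nat.factorial i : ℂ))⁻¹ * (inner ℂ (φ l) ((A ^ i) (φ 0)) : ℂ)‖) +
        ∑' n : ℕ, ‖(((Nat.factorial (n + l)) : ℂ))⁻¹ * (inner ℂ (φ l) ((A ^ (n + l)) (φ 0)) : ℂ)‖ :=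
        hsplit.symm
    _ = ∑' n : ℕ, ‖(((Nat.factorial (n + l)) : ℂ))⁻¹ * (inner ℂ (φ l) ((A ^ (n + l)) (φ 0)) : ℂ)‖ := by
        rw [Finset.sum_eq_zero, zero_add]
        intro i hi
        rw [hzero i (Finset.mem_range.mp hi), mul_zero, norm_zero]
    _ ≤ ∑' n : ℕ, (s ^ l * M ^ l / (Nat.factorial l)) * (M ^ n / (Nat.factorial n)) := by
        refine Summable.tsum_le_tsum htail ((summable_nat_add_iff l).mpr hnsum) ?_
        exact (Real.summable_pow_div_factorial M).mul_left _
    _ = (s ^ l * M ^ l / (Nat.factorial l)) * E := htailsum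
    _ ≤ ((M + 1) * E) ^ l * s ^ l / (Nat.factorial ((l + 1) / 2)) := by
        have hple : ((l + 1) / 2) ≤ l := by omega
        have hfle : ((Nat.factorial ((l + 1) / 2)) : ℝ) ≤ (Nat.factorial l : ℝ) := by
          exact_mod_cast Nat.factorial_le hple
        have hMl : M ^ l * E ≤ ((M + 1) * E) ^ l := by
          rw [mul_pow]
          apply mul_le_mul
          · exact pow_le_pow_left₀ hM0 (by linarith) l
          · exact le_self_pow₀ (by linarith) (by omega)
          · linarith
          · positivity
        calc s ^ l * M ^ l / (Nat.factorial l) * E = (M ^ l * E) * s ^ l / (Nat.factorial l) := by ring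
        _ ≤ ((M + 1) * E) ^ l * s ^ l / (Nat.factorial l) :=
            div_le_div₀ (by positivity)
              (mul_le_mul_of_nonneg_right hMl (by positivity)) (hfacpos' l) le_rfl
        _ ≤ ((M + 1) * E) ^ l * s ^ l / (Nat.factorial ((l + 1) / 2)) :=
            div_le_div₀ (by positivity) le_rfl (hfacpos' _) hfle
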